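/- Let τ_n(t) = det(μ_{ij}(t))_{0≤i,j≤n-1} be the determinant of the time-deformed moment matrix, where μ_{ij}(t) = ⟨x^i | y^j e^{∑_k t_k y^k}⟩, and assume τ_n(t) ≠ 0. Then z^n τ_n(t - [z^{-1}]) / τ_n(t) is a monic polynomial of degree n in z, equal to the n-th monic orthogonal polynomial p_n(t; z) characterized by ⟨x^i | p_n(t;y) e^{∑_k t_k y^k}⟩ = 0 for 0 ≤ i ≤ n-1. -/

import Mathlib

open Matrix Polynomial Finset

/-- Minor: determinant of the n×n matrix of moments with columns `{0,...,n} \ {j}`. -/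
noncomputable def mino (n : ℕ) (μ : ℕ → ℕ → ℝ) (j : Fin (n+1)) : ℝ :=
  Matrix.det (Matrix.of fun i k : Fin n => μ (i : ℕ) ((j.succAbove k : ℕ)))

/-- Laplace expansion along the last row, specialized. -/
lemma expand_last {n : ℕ} (A : Matrix (Fin (n+1)) (Fin (n+1)) ℝ) :
    A.det = ∑ j : Fin (n+1), (-1) ^ (n + (j : ℕ)) * A (Fin.last n) j *
      Matrix.det (A.submatrix Fin.castSucc j.succAbove) := by
  rw [Matrix.det_succ_row A (Fin.last n)]
  refine Finset.sum_congr rfl fun j _ => ?_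
  rw [Fin.succAbove_last]
  rfl

/-- The bordered matrix: moment rows on top, row `r` at the bottom. -/
def Big (n : ℕ) (μ : ℕ → ℕ → ℝ) (r : Fin (n+1) → ℝ) :
    Matrix (Fin (n+1)) (Fin (n+1)) ℝ :=
  Matrix.of fun i j => if (i : ℕ) < n then μ (i : ℕ) (j : ℕ) else r j

lemma Big_last {n : ℕ} (μ : ℕ → ℕ → ℝ) (r : Fin (n+1) → ℝ) (j : Fin (n+1)) :
    Big n μ r (Fin.last n) j = r j := by
  simp [Big]

lemma Big_castSucc {n : ℕ} (μ : ℕ → ℕ → ℝ) (r : Fin (n+1) → ℝ) (i : Fin n)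
    (j : Fin (n+1)) : Big n μ r (Fin.castSucc i) j = μ (i : ℕ) (j : ℕ) := by
  simp [Big, i.is_lt]

lemma Big_det {n : ℕ} (μ : ℕ → ℕ → ℝ) (r : Fin (n+1) → ℝ) :
    (Big n μ r).det = ∑ j : Fin (n+1), (-1) ^ (n + (j : ℕ)) * r j * mino n μ j := by
  rw [expand_last]
  refine Finset.sum_congr rfl fun j _ => ?_
  rw [Big_last]
  congr 1
  unfold mino
  congr 1
  ext i k
  simp [Matrix.submatrix_apply, Big_castSucc]

lemma mino_last {n : ℕ} (μ : ℕ → ℕ → ℝ) :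
    mino n μ (Fin.last n) = Matrix.det (Matrix.of fun i j : Fin n => μ (i : ℕ) (j : ℕ)) := by
  unfold mino
  congr 1
  ext i k
  rw [Fin.succAbove_last]
  simp

theorem tau_shift_is_monic_orthogonal_polynomial (n : ℕ) (μ : ℕ → ℕ → ℝ)
    (hτ : Matrix.det (Matrix.of fun i j : Fin n => μ (i : ℕ) (j : ℕ)) ≠ 0) :
    ∃ p : Polynomial ℝ, p.Monic ∧ p.natDegree = n ∧
      (∀ i < n, ∑ j ∈ Finset.range (n + 1), p.coeff j * μ i j = 0) ∧
      ∀ z : ℝ, z ≠ 0 →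
        z ^ n *
            Matrix.det (Matrix.of fun i j : Fin n =>
              μ (i : ℕ) (j : ℕ) - z⁻¹ * μ (i : ℕ) ((j : ℕ) + 1)) /
          Matrix.det (Matrix.of fun i j : Fin n => μ (i : ℕ) (j : ℕ)) =
        p.eval z := by
  set τ : ℝ := Matrix.det (Matrix.of fun i j : Fin n => μ (i : ℕ) (j : ℕ)) with hτdef
  set p : Polynomial ℝ :=
    C τ⁻¹ * ∑ j : Fin (n+1), C ((-1) ^ (n + (j : ℕ)) * mino n μ j) * X ^ (j : ℕ) with hp
  have hcoeff : ∀ k : Fin (n+1), p.coeff (k : ℕ) = τ⁻¹ * ((-1) ^ (n + (k : ℕ)) * mino n μ k) := by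
    intro k
    rw [hp, coeff_C_mul, finset_sum_coeff]
    congr 1
    rw [Finset.sum_eq_single k]
    · rw [coeff_C_mul, coeff_X_pow, if_pos rfl, mul_one]
    · intro j _ hjk
      rw [coeff_C_mul, coeff_X_pow, if_neg, mul_zero]
      exact fun h => hjk (Fin.ext h.symm)
    · simp
  have hcoeff_hi : ∀ k : ℕ, n < k → p.coeff k = 0 := by
    intro k hk
    rw [hp, coeff_C_mul, finset_sum_coeff]
    have : ∀ j : Fin (n+1), (C ((-1) ^ (n + (j : ℕ)) * mino n μ j) * X ^ (j : ℕ)).coeff k = 0 := by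
      intro j
      rw [coeff_C_mul, coeff_X_pow, if_neg, mul_zero]
      have := j.is_lt
      omega
    rw [Finset.sum_eq_zero fun j _ => this j, mul_zero]
  have hne : ((-1 : ℝ)) ^ (n + n) = 1 := by
    rw [← two_mul, pow_mul]; norm_num
  have hcoeff_n : p.coeff n = 1 := by
    have := hcoeff (Fin.last n)
    simp only [Fin.val_last] at this
    rw [this, mino_last, hne, one_mul, inv_mul_cancel₀ hτ]
  have hdeg : p.natDegree = n := by
    refine le_antisymm ?_ (le_natDegree_of_ne_zero (by rw [hcoeff_n]; exact one_ne_zero))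
    rw [natDegree_le_iff_coeff_eq_zero]
    exact hcoeff_hi
  have hmonic : p.Monic := by
    unfold Polynomial.Monic
    rw [leadingCoeff, hdeg, hcoeff_n]
  refine ⟨p, hmonic, hdeg, ?_, ?_⟩
  · -- orthogonality
    intro i hi
    have hzero : (Big n μ (fun j => μ i (j : ℕ))).det = 0 := by
      apply Matrix.det_zero_of_row_eq (i := Fin.castSucc ⟨i, hi⟩) (j := Fin.last n)
      · intro h
        have := congrArg Fin.val h
        simp at this
        omega
      · funext j
        rw [Big_castSucc, Big_last]
    rw [Big_det] at hzero
    rw [Finset.sum_range fun j => p.coeff j * μ i j]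
    calc ∑ j : Fin (n+1), p.coeff (j : ℕ) * μ i (j : ℕ)
        = τ⁻¹ * ∑ j : Fin (n+1), (-1) ^ (n + (j : ℕ)) * μ i (j : ℕ) * mino n μ j := by
          rw [Finset.mul_sum]
          refine Finset.sum_congr rfl fun j _ => ?_
          rw [hcoeff j]; ring
      _ = 0 := by rw [hzero, mul_zero]
  · -- evaluation
    intro z hz
    set E : Matrix (Fin (n+1)) (Fin (n+1)) ℝ :=
      Matrix.of fun k j => if k = j then 1 else if (k : ℕ) = (j : ℕ) + 1 then -z⁻¹ else 0
      with hE
    have hEdet : E.det = 1 := by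
      rw [Matrix.det_of_lowerTriangular E]
      · exact Finset.prod_eq_one fun i _ => by simp [hE]
      · intro i j hij
        have hij' : i < j := OrderDual.toDual_lt_toDual.mp hij
        have hv : (i : ℕ) < (j : ℕ) := Fin.lt_iff_val_lt_val.mp hij'
        have h1 : i ≠ j := ne_of_lt hij'
        have h2 : (i : ℕ) ≠ (j : ℕ) + 1 := by omega
        simp [hE, h1, h2]
    have hrow : ∀ (v : Fin (n+1) → ℝ) (j : Fin (n+1)),
        (∑ k : Fin (n+1), v k * E k j) =
        v j + (if h : (j : ℕ) < n then -(z⁻¹ * v ⟨(j : ℕ) + 1, by omega⟩) else 0) := by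
      intro v j
      have hsplit : ∀ k : Fin (n+1), v k * E k j =
          (if k = j then v k else 0) + (if (k : ℕ) = (j : ℕ) + 1 then -(z⁻¹ * v k) else 0) := by
        intro k
        by_cases h1 : k = j
        · subst h1
          have : ¬ ((k : ℕ) = (k : ℕ) + 1) := by omega
          simp [hE, this]
        · by_cases h2 : (k : ℕ) = (j : ℕ) + 1
          · simp [hE, h1, h2]; ring
          · simp [hE, h1, h2]
      rw [Finset.sum_congr rfl fun k _ => hsplit k, Finset.sum_add_distrib]
      congr 1
      · simp
      · by_cases hj : (j : ℕ) < n
        · rw [dif_pos hj]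
          rw [Finset.sum_eq_single (⟨(j : ℕ) + 1, by omega⟩ : Fin (n+1))]
          · simp
          · intro k _ hk
            rw [if_neg]
            intro h
            exact hk (Fin.ext h)
          · simp
        · rw [dif_neg hj]
          refine Finset.sum_eq_zero fun k _ => ?_
          rw [if_neg]
          have := k.is_lt
          have := j.is_lt
          omega
    set P : Matrix (Fin (n+1)) (Fin (n+1)) ℝ := (Big n μ fun j => z ^ (j : ℕ)) * E with hP
    have hPdet : P.det = (Big n μ fun j => z ^ (j : ℕ)).det := by
      rw [hP, Matrix.det_mul, hEdet, mul_one]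
    have hPlast : ∀ j : Fin (n+1), P (Fin.last n) j = if j = Fin.last n then z ^ n else 0 := by
      intro j
      have : P (Fin.last n) j = ∑ k : Fin (n+1), (Big n μ fun j => z ^ (j : ℕ)) (Fin.last n) k * E k j :=
        rfl
      rw [this]
      rw [Finset.sum_congr rfl fun k _ => by rw [Big_last], hrow (fun k => z ^ (k : ℕ)) j]
      by_cases hj : (j : ℕ) < n
      · rw [dif_pos hj, if_neg (by intro h; rw [h] at hj; simp at hj)]
        have : z⁻¹ * z ^ ((j : ℕ) + 1) = z ^ (j : ℕ) := by
          rw [pow_succ, ← mul_assoc]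
          ring_nf
          rw [mul_comm, ← mul_assoc, inv_mul_cancel₀ hz, one_mul]
        simp only [this]
        ring
      · have hjl : j = Fin.last n := by
          have := j.is_lt; apply Fin.ext; simp; omega
        rw [dif_neg hj, if_pos hjl, hjl]
        simp
    have hPsub : ∀ (i : Fin n) (k : Fin n), P (Fin.castSucc i) (Fin.castSucc k) =
        μ (i : ℕ) (k : ℕ) - z⁻¹ * μ (i : ℕ) ((k : ℕ) + 1) := by
      intro i k
      have : P (Fin.castSucc i) (Fin.castSucc k) =
          ∑ l : Fin (n+1), (Big n μ fun j => z ^ (j : ℕ)) (Fin.castSucc i) l * E l (Fin.castSucc k) :=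
        rfl
      rw [this, Finset.sum_congr rfl fun l _ => by rw [Big_castSucc],
        hrow (fun l => μ (i : ℕ) (l : ℕ)) (Fin.castSucc k)]
      rw [dif_pos (by simp [k.is_lt])]
      simp
      ring
    have hPdet2 : P.det = z ^ n *
        Matrix.det (Matrix.of fun i j : Fin n =>
          μ (i : ℕ) (j : ℕ) - z⁻¹ * μ (i : ℕ) ((j : ℕ) + 1)) := by
      rw [expand_last P]
      rw [Finset.sum_eq_single (Fin.last n)]
      · rw [hPlast, if_pos rfl, Fin.val_last, hne, one_mul]
        congr 1
        rw [Fin.succAbove_last]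
        congr 1
        ext i k
        rw [Matrix.submatrix_apply, hPsub]
        simp
      · intro j _ hj
        rw [hPlast, if_neg hj]
        ring
      · simp
    have heval : p.eval z = τ⁻¹ * (Big n μ fun j => z ^ (j : ℕ)).det := by
      rw [Big_det, hp]
      simp only [eval_mul, eval_C, eval_finset_sum, eval_mul, eval_C, eval_pow, eval_X]
      congr 1
      refine Finset.sum_congr rfl fun j _ => ?_
      ring
    rw [heval, ← hPdet, hPdet2]
    rw [div_eq_iff hτ, mul_comm τ⁻¹, mul_assoc, inv_mul_cancel₀ hτ, mul_one]
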